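/- Fix q ≥ 1, t > 0, n ≥ 1, and bounded sets of points: for x̂ = (x,z), ŷ = (y,w) in a fixed bounded subset of ℝ^{n+1}, as t → ∞ the strip kernel (q > 1 case) satisfies G_t(x̂,ŷ) = |x̂-ŷ|^{-q} + 2ζ(q)/(2t)^q − [B_q(|x-y|² − (q+1)(z-w)²) − C_q z w]/(2t)^{q+2} + O(t^{-(q+3)}), where B_q = q ζ(q+2) and C_q = 2q(q+1) ∑_{j odd} |j|^{-(q+2)}, with the O uniform on the bounded set. -/

import Mathlib

open Real Set
set_option maxHeartbeats 1000000


lemma mvt_abs {f f' : ℝ → ℝ} {C u : ℝ}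
    (hd : ∀ x ∈ uIcc (0:ℝ) u, HasDerivAt f (f' x) x)
    (hb : ∀ x ∈ uIcc (0:ℝ) u, |f' x| ≤ C) (h0 : f 0 = 0) : |f u| ≤ C * |u| := by
  have := Convex.norm_image_sub_le_of_norm_hasDerivWithin_le
    (f := f) (f' := f') (s := uIcc (0:ℝ) u)
    (fun x hx => (hd x hx).hasDerivWithinAt) hb (convex_uIcc 0 u)
    left_mem_uIcc right_mem_uIcc
  simpa [h0] using this

lemma dpow {e : ℝ} {x : ℝ} (hx : 1 + x ≠ 0) :
    HasDerivAt (fun y : ℝ => (1 + y) ^ e) (e * (1 + x) ^ (e - 1)) x := by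
  have h : HasDerivAt (fun y : ℝ => 1 + y) 1 x := (hasDerivAt_id x).const_add 1
  simpa using h.rpow_const (Or.inl hx)

lemma mem_half {u x : ℝ} (hu : |u| ≤ 1/2) (hx : x ∈ uIcc (0:ℝ) u) :
    |x| ≤ 1/2 ∧ (1:ℝ)/2 ≤ 1 + x ∧ 1 + x ≠ 0 ∧ |x| ≤ |u| := by
  rw [uIcc_eq_union] at hx
  have h1 : |x| ≤ |u| := by
    rcases hx with h | h <;> rcases h with ⟨h1, h2⟩ <;> rw [abs_le] <;>
      constructor <;> nlinarith [abs_nonneg u, le_abs_self u, neg_abs_le u]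
  have h2 : |x| ≤ 1/2 := h1.trans hu
  have := abs_le.mp h2
  exact ⟨h2, by linarith, by linarith, h1⟩

lemma rpow_neg_bound {x e : ℝ} (hx : (1:ℝ)/2 ≤ 1 + x) (he : e ≤ 0) :
    |(1 + x) ^ e| ≤ 2 ^ (-e) := by
  rw [abs_of_nonneg (rpow_nonneg (by linarith) _)]
  calc (1+x) ^ e ≤ ((1:ℝ)/2) ^ e := rpow_le_rpow_of_nonpos (by norm_num) hx he
    _ = 2 ^ (-e) := by
        rw [one_div, Real.inv_rpow (by norm_num), ← Real.rpow_neg (by norm_num)]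

lemma taylor2 {p : ℝ} (hp : 0 < p) :
    ∃ K : ℝ, 0 ≤ K ∧ ∀ u : ℝ, |u| ≤ 1/2 →
      |(1 + u) ^ (-p) - (1 - p * u + p * (p + 1) / 2 * u ^ 2)| ≤ K * |u| ^ 3 := by
  set K : ℝ := p * (p+1) * (p+2) * 2 ^ (p+3) with hK
  have hKpos : 0 ≤ K := by positivity
  refine ⟨K, hKpos, ?_⟩
  -- step 1 : bound on second derivative difference
  have step1 : ∀ ξ : ℝ, |ξ| ≤ 1/2 →
      |p * (p+1) * ((1+ξ) ^ (-p-2) - 1)| ≤ K * |ξ| := by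
    intro ξ hξ
    refine mvt_abs (f := fun y => p*(p+1)*((1+y) ^ (-p-2) - 1))
      (f' := fun x => p*(p+1)*((-p-2) * (1+x) ^ (-p-3))) ?_ ?_ (by simp)
    · intro x hx
      obtain ⟨_, _, hne, _⟩ := mem_half hξ hx
      have := (dpow (e := -p-2) hne).sub_const 1
      have h2 := this.const_mul (p*(p+1))
      refine h2.congr_deriv ?_
      ring_nf
    · intro x hx
      obtain ⟨_, hge, hne, _⟩ := mem_half hξ hx
      have hb := rpow_neg_bound (e := -p-3) hge (by linarith)
      rw [hK]
      calc |p*(p+1)*((-p-2) * (1+x) ^ (-p-3))|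
          = p*(p+1)*(p+2) * |(1+x) ^ (-p-3)| := by
            rw [abs_mul, abs_mul, abs_mul, abs_of_nonneg hp.le,
              abs_of_nonneg (by linarith : (0:ℝ) ≤ p+1),
              abs_of_nonpos (by linarith : -p-2 ≤ 0)]
            ring
        _ ≤ p*(p+1)*(p+2) * 2 ^ (p+3) := by
            have : -(-p-3) = p + 3 := by ring
            rw [this] at hb
            exact mul_le_mul_of_nonneg_left hb (by positivity)
  -- step 2 : bound on first derivative difference
  have step2 : ∀ ξ : ℝ, |ξ| ≤ 1/2 →
      |(-p) * (1+ξ) ^ (-p-1) + p - p*(p+1)*ξ| ≤ K * |ξ| ^ 2 := by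
    intro ξ hξ
    have h := mvt_abs (u := ξ) (C := K * |ξ|)
      (f := fun y => (-p) * (1+y) ^ (-p-1) + p - p*(p+1)*y)
      (f' := fun x => p*(p+1)*((1+x) ^ (-p-2) - 1)) ?_ ?_ (by simp)
    · calc _ ≤ K * |ξ| * |ξ| := h
        _ = K * |ξ| ^ 2 := by ring
    · intro x hx
      obtain ⟨_, _, hne, _⟩ := mem_half hξ hx
      have h1 := ((dpow (e := -p-1) hne).const_mul (-p)).add_const p
      have h2 := h1.sub ((hasDerivAt_id x).const_mul (p*(p+1)))
      refine h2.congr_deriv ?_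
      ring_nf
    · intro x hx
      obtain ⟨hx2, _, _, hxu⟩ := mem_half hξ hx
      calc |p*(p+1)*((1+x) ^ (-p-2) - 1)| ≤ K * |x| := step1 x hx2
        _ ≤ K * |ξ| := mul_le_mul_of_nonneg_left hxu hKpos
  -- step 3
  intro u hu
  have h := mvt_abs (u := u) (C := K * |u| ^ 2)
    (f := fun y => (1+y) ^ (-p) - (1 - p*y + p*(p+1)/2 * y^2))
    (f' := fun x => (-p) * (1+x) ^ (-p-1) + p - p*(p+1)*x) ?_ ?_ (by simp)
  · calc _ ≤ K * |u| ^ 2 * |u| := h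
      _ = K * |u| ^ 3 := by ring
  · intro x hx
    obtain ⟨_, _, hne, _⟩ := mem_half hu hx
    have h1 := dpow (e := -p) hne
    have h2 : HasDerivAt (fun y : ℝ => 1 - p*y + p*(p+1)/2 * y^2)
        (-p + p*(p+1)/2 * (2*x)) x := by
      have ha : HasDerivAt (fun y : ℝ => 1 - p*y) (-p) x := by
        simpa using ((hasDerivAt_id x).const_mul p).const_sub 1
      have hb : HasDerivAt (fun y : ℝ => p*(p+1)/2 * y^2) (p*(p+1)/2 * (2*x)) x := by
        simpa using ((hasDerivAt_pow 2 x)).const_mul (p*(p+1)/2)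
      exact ha.add hb
    have := h1.sub h2
    refine this.congr_deriv ?_
    ring_nf
  · intro x hx
    obtain ⟨hx2, _, _, hxu⟩ := mem_half hu hx
    calc |(-p) * (1+x) ^ (-p-1) + p - p*(p+1)*x| ≤ K * |x| ^ 2 := step2 x hx2
      _ ≤ K * |u| ^ 2 := by
        have h0 := abs_nonneg x
        gcongr


lemma perj {q K R : ℝ} (hq : 1 < q) (hK : 0 ≤ K)
    (htay : ∀ u : ℝ, |u| ≤ 1/2 →
      |(1 + u) ^ (-(q/2)) - (1 - (q/2) * u + (q/2) * ((q/2) + 1) / 2 * u ^ 2)| ≤ K * |u| ^ 3)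
    (hR : 0 < R) :
    ∃ K' : ℝ, 0 ≤ K' ∧ ∀ t : ℝ, max 1 (8*(R+1)^2) ≤ t → ∀ r s : ℝ,
      0 ≤ r → r ≤ 2*R → |s| ≤ 2*R → ∀ j : ℤ, j ≠ 0 →
      |(r^2 + (s - 2*t*(j:ℝ))^2) ^ (-q/2) -
        ((2*t)^(-q) * ((|j| : ℤ) : ℝ)^(-q)
          + (2*t)^(-(q+1)) * (q * s * ((|j| : ℤ) : ℝ)^(-q) / (j:ℝ))
          + (2*t)^(-(q+2)) * ((|j| : ℤ) : ℝ)^(-(q+2)) * (q*(q+1)/2 * s^2 - q/2 * r^2))|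
      ≤ K' * ((|j| : ℤ) : ℝ)^(-(q+3)) / t^(q+3) := by
  set c : ℝ := 2*R^2 + 2*R with hc
  set c₂ : ℝ := (q/2)*((q/2)+1)/2 with hc2
  have hc2pos : 0 ≤ c₂ := by rw [hc2]; positivity
  have hc0 : 0 ≤ c := by rw [hc]; positivity
  clear_value c c₂
  refine ⟨K * c^3 + c₂ * (4*R^4 + 8*R^3),
    add_nonneg (mul_nonneg hK (pow_nonneg hc0 3)) (mul_nonneg hc2pos (by positivity)), ?_⟩
  intro t ht r s hr0 hr hs j hj
  have ht1 : (1:ℝ) ≤ t := le_trans (le_max_left _ _) ht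
  have ht0 : (0:ℝ) < t := by linarith
  have hjr1 : (1:ℝ) ≤ |(j:ℝ)| := by
    rw [← Int.cast_abs]
    exact_mod_cast Int.one_le_abs hj
  have hjr0 : (j:ℝ) ≠ 0 := Int.cast_ne_zero.mpr hj
  set jr : ℝ := (j:ℝ) with hjrdef
  have hA : ((|j| : ℤ) : ℝ) = |jr| := Int.cast_abs
  clear_value jr
  have htj1 : (1:ℝ) ≤ t * |jr| :=
    le_trans ht1 (le_mul_of_one_le_right (by linarith) hjr1)
  have htj0 : (0:ℝ) < t * |jr| := by linarith
  set m : ℝ := 2*t*jr with hm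
  have hmabs : |m| = 2*t*|jr| := by
    rw [hm, abs_mul, abs_of_nonneg (by linarith : (0:ℝ) ≤ 2*t)]
  have hm0 : m ≠ 0 := by
    rw [hm]; exact mul_ne_zero (by positivity) hjr0
  have h2t0 : (0:ℝ) < 2*t := by linarith
  set a : ℝ := r^2 + s^2 with ha
  set u : ℝ := (a - 2*m*s)/m^2 with hu
  clear_value m a u
  have hsplit : r^2 + (s - m)^2 = m^2 * (1 + u) := by
    rw [hu, ha]
    field_simp
    ring
  have h1u : 0 ≤ 1 + u := by
    have h2 : (0:ℝ) < m^2 := by positivity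
    have h3 : 0 ≤ m^2*(1+u) := hsplit ▸ (by positivity)
    by_contra hcon
    push_neg at hcon
    have := mul_neg_of_pos_of_neg h2 hcon
    linarith
  have ha8 : a ≤ 8*R^2 := by
    obtain ⟨hs1, hs2⟩ := abs_le.mp hs
    rw [ha]
    have h1 : r^2 ≤ (2*R)^2 := sq_le_sq' (by linarith) hr
    have h2 : s^2 ≤ (2*R)^2 := sq_le_sq' hs1 hs2
    have h3 : (2*R)^2 = 4*R^2 := by ring
    linarith
  have ha0 : 0 ≤ a := by rw [ha]; positivity
  have hj2 : jr^2 = |jr|^2 := (sq_abs jr).symm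
  -- |u| bound
  have hueq : u = a/m^2 - 2*s/m := by
    rw [hu]; field_simp
  have hub : |u| ≤ c / (t * |jr|) := by
    have hm2 : m^2 = 4*(t*|jr|)^2 := by
      have h' : (t*|jr|)^2 = t^2*jr^2 := by rw [mul_pow, ← hj2]
      rw [h', hm]; ring
    have h1 : |a/m^2| ≤ 2*R^2/(t*|jr|) := by
      rw [abs_div, abs_of_nonneg ha0, abs_of_nonneg (sq_nonneg m),
        div_le_div_iff₀ (by positivity) htj0, hm2]
      calc a * (t*|jr|) ≤ 8*R^2 * (t*|jr|) := mul_le_mul_of_nonneg_right ha8 htj0.le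
        _ ≤ 8*R^2 * ((t*|jr|)*(t*|jr|)) := by
            have h0 : (0:ℝ) ≤ 8*R^2*(t*|jr|) := by positivity
            linarith [mul_le_mul_of_nonneg_left htj1 h0]
        _ = 2*R^2 * (4*(t*|jr|)^2) := by ring
    have h2 : |2*s/m| ≤ 2*R/(t*|jr|) := by
      rw [abs_div, hmabs, div_le_div_iff₀ (by positivity) htj0]
      have h4R : |2*s| ≤ 4*R := by
        rw [abs_mul, abs_two]
        linarith [hs]
      calc |2*s| * (t*|jr|) ≤ 4*R * (t*|jr|) := mul_le_mul_of_nonneg_right h4R htj0.le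
        _ = 2*R * (2*t*|jr|) := by ring
    calc |u| = |a/m^2 - 2*s/m| := by rw [hueq]
      _ ≤ |a/m^2| + |2*s/m| := abs_sub _ _
      _ ≤ 2*R^2/(t*|jr|) + 2*R/(t*|jr|) := add_le_add h1 h2
      _ = c/(t*|jr|) := by rw [hc]; ring
  have huh : |u| ≤ 1/2 := by
    refine hub.trans ?_
    rw [div_le_iff₀ htj0]
    have h8 : 8*(R+1)^2 ≤ t := le_trans (le_max_right _ _) ht
    have h9 : t ≤ t*|jr| := le_mul_of_one_le_right ht0.le hjr1
    have hexp : 8*(R+1)^2 = 8*R^2+16*R+8 := by ring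
    rw [hc]
    linarith [sq_nonneg R, hR, h8, h9, hexp ▸ h8]
  -- rpow factorization
  have hsq : ∀ v : ℝ, (v^2 : ℝ) ^ (-q/2) = |v|^(-q) := by
    intro v
    rw [← sq_abs, ← Real.rpow_natCast |v| 2, ← Real.rpow_mul (abs_nonneg v)]
    congr 1
    push_cast
    ring
  have hterm : (r^2 + (s - m)^2) ^ (-q/2) = |m|^(-q) * (1+u)^(-(q/2)) := by
    rw [hsplit, Real.mul_rpow (sq_nonneg m) h1u, hsq m, neg_div]
  -- bridging equalities
  have e0 : |m|^(-q) = (2*t)^(-q) * |jr|^(-q) := by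
    rw [hmabs, Real.mul_rpow h2t0.le (abs_nonneg jr)]
  have e1 : (2*t)^(-(q+1)) = (2*t)^(-q) / (2*t) := by
    rw [show -(q+1) = -q + (-1) by ring, Real.rpow_add h2t0, Real.rpow_neg_one,
      div_eq_mul_inv]
  have e2 : (2*t)^(-(q+2)) = (2*t)^(-q) / (2*t)^2 := by
    rw [show -(q+2) = -q + ((-2:ℤ):ℝ) by push_cast; ring, Real.rpow_add h2t0,
      Real.rpow_intCast, div_eq_mul_inv]
    norm_num
  have e3 : |jr|^(-(q+2)) = |jr|^(-q) / jr^2 := by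
    rw [show -(q+2) = -q + ((-2:ℤ):ℝ) by push_cast; ring,
      Real.rpow_add (by linarith : (0:ℝ) < |jr|), Real.rpow_intCast, div_eq_mul_inv, hj2]
    norm_num
  have hmain : (2*t)^(-q) * ((|j| : ℤ) : ℝ)^(-q)
          + (2*t)^(-(q+1)) * (q * s * ((|j| : ℤ) : ℝ)^(-q) / jr)
          + (2*t)^(-(q+2)) * ((|j| : ℤ) : ℝ)^(-(q+2)) * (q*(q+1)/2 * s^2 - q/2 * r^2)
      = |m|^(-q) * (1 + q*s/m + (q*(q+1)/2 * s^2 - q/2 * r^2)/m^2) := by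
    rw [hA, e0, e1, e2, e3, hm]
    field_simp
  -- polynomial remainder identity
  have hpoly : (1 - (q/2) * u + c₂ * u ^ 2)
      - (1 + q*s/m + (q*(q+1)/2 * s^2 - q/2 * r^2)/m^2)
      = c₂ * (a^2 - 4*a*m*s)/m^4 := by
    rw [hu, hc2, ha]
    have hm2 : m^2 ≠ 0 := pow_ne_zero 2 hm0
    field_simp
    ring
  -- assemble
  set P : ℝ := 1 - (q/2) * u + c₂ * u ^ 2 with hP
  have hD : (r^2 + (s - m)^2) ^ (-q/2) -
      ((2*t)^(-q) * ((|j| : ℤ) : ℝ)^(-q)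
        + (2*t)^(-(q+1)) * (q * s * ((|j| : ℤ) : ℝ)^(-q) / jr)
        + (2*t)^(-(q+2)) * ((|j| : ℤ) : ℝ)^(-(q+2)) * (q*(q+1)/2 * s^2 - q/2 * r^2))
      = |m|^(-q) * (((1+u)^(-(q/2)) - P) + c₂ * (a^2 - 4*a*m*s)/m^4) := by
    rw [hterm, hmain, ← hpoly, hP]
    ring
  rw [hD]
  have hmq0 : (0:ℝ) ≤ |m|^(-q) := Real.rpow_nonneg (abs_nonneg m) _
  -- bound the taylor part
  have hb1 : |(1+u)^(-(q/2)) - P| ≤ K * c^3 / (t*|jr|)^3 := by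
    refine (htay u huh).trans ?_
    have h3 : |u|^3 ≤ (c/(t*|jr|))^3 := by
      exact pow_le_pow_left₀ (abs_nonneg u) hub 3
    rw [div_pow] at h3
    calc K * |u|^3 ≤ K * (c^3/(t*|jr|)^3) := by
          exact mul_le_mul_of_nonneg_left h3 hK
      _ = K * c^3 / (t*|jr|)^3 := by ring
  -- bound the remainder part
  have hb2 : |c₂ * (a^2 - 4*a*m*s)/m^4| ≤ c₂ * (4*R^4 + 8*R^3) / (t*|jr|)^3 := by
    rw [abs_div, abs_of_nonneg (by positivity : (0:ℝ) ≤ m^4), abs_mul,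
      abs_of_nonneg hc2pos, div_le_div_iff₀ (by positivity) (by positivity)]
    have hm4 : m^4 = 16*(t*|jr|)^4 := by
      have h' : (t*|jr|)^4 = t^4*jr^4 := by
        rw [mul_pow, show |jr|^4 = (|jr|^2)^2 by ring, ← hj2]; ring
      rw [h', hm]; ring
    have habs : |a^2 - 4*a*m*s| ≤ a^2 + 8*a*(t*|jr|)*|s| := by
      calc |a^2 - 4*a*m*s| ≤ |a^2| + |4*a*m*s| := abs_sub _ _
        _ = a^2 + 4*a*(|m| * |s|) := by
            rw [abs_of_nonneg (sq_nonneg a), abs_mul, abs_mul, abs_mul]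
            rw [abs_of_nonneg (by norm_num : (0:ℝ) ≤ (4:ℝ)), abs_of_nonneg ha0]
            ring
        _ = a^2 + 8*a*(t*|jr|)*|s| := by rw [hmabs]; ring
    have hs0 : 0 ≤ |s| := abs_nonneg s
    have ha2 : a^2 ≤ 64*R^4 := by
      linarith [mul_le_mul ha8 ha8 ha0 (by positivity : (0:ℝ) ≤ 8*R^2)]
    have hprod : 8*a*(t*|jr|)*|s| ≤ 128*R^3*(t*|jr|) := by
      have h' : a*|s| ≤ 16*R^3 := by
        linarith [mul_le_mul ha8 hs hs0 (by positivity : (0:ℝ) ≤ 8*R^2)]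
      linarith [mul_le_mul_of_nonneg_right h' htj0.le]
    calc c₂ * |a^2 - 4*a*m*s| * (t*|jr|)^3
        ≤ c₂ * (a^2 + 8*a*(t*|jr|)*|s|) * (t*|jr|)^3 := by
          have := mul_le_mul_of_nonneg_left habs hc2pos
          exact mul_le_mul_of_nonneg_right this (by positivity)
      _ ≤ c₂ * (64*R^4*(t*|jr|) + 128*R^3*(t*|jr|)) * (t*|jr|)^3 := by
          have h64 : a^2 ≤ 64*R^4*(t*|jr|) := by
            linarith [mul_le_mul_of_nonneg_left htj1 (by positivity : (0:ℝ) ≤ 64*R^4), ha2]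
          have := add_le_add h64 hprod
          have h2' := mul_le_mul_of_nonneg_left this hc2pos
          exact mul_le_mul_of_nonneg_right h2' (by positivity)
      _ = c₂ * (4*R^4 + 8*R^3) * (16*(t*|jr|)^4) := by ring
      _ = c₂ * (4*R^4 + 8*R^3) * m^4 := by rw [hm4]
  have hstep : |m|^(-q) * |((1+u)^(-(q/2)) - P) + c₂ * (a^2 - 4*a*m*s)/m^4|
      ≤ (t*|jr|)^(-q) * ((K*c^3 + c₂ * (4*R^4 + 8*R^3)) / (t*|jr|)^3) := by
    have hmq : |m|^(-q) ≤ (t*|jr|)^(-q) := by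
      refine Real.rpow_le_rpow_of_nonpos htj0 ?_ (by linarith)
      rw [hmabs]; linarith [htj0]
    have htri : |((1+u)^(-(q/2)) - P) + c₂ * (a^2 - 4*a*m*s)/m^4|
        ≤ (K*c^3 + c₂ * (4*R^4 + 8*R^3)) / (t*|jr|)^3 := by
      calc _ ≤ |(1+u)^(-(q/2)) - P| + |c₂ * (a^2 - 4*a*m*s)/m^4| := abs_add_le _ _
        _ ≤ K * c^3 / (t*|jr|)^3 + c₂ * (4*R^4 + 8*R^3) / (t*|jr|)^3 := add_le_add hb1 hb2
        _ = (K*c^3 + c₂ * (4*R^4 + 8*R^3)) / (t*|jr|)^3 := by ring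
    exact mul_le_mul hmq htri (abs_nonneg _) (Real.rpow_nonneg htj0.le _)
  rw [abs_mul, abs_of_nonneg hmq0]
  refine hstep.trans (le_of_eq ?_)
  -- final exponent algebra
  rw [hA]
  have k1 : (t*|jr|)^(-q) * ((t*|jr|)^3)⁻¹ = (t*|jr|)^(-(q+3)) := by
    rw [← Real.rpow_natCast (t*|jr|) 3, ← Real.rpow_neg htj0.le, ← Real.rpow_add htj0]
    ring_nf
  have k2 : (t*|jr|)^(-(q+3)) = t^(-(q+3)) * |jr|^(-(q+3)) :=
    Real.mul_rpow ht0.le (abs_nonneg jr)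
  have k3 : t^(-(q+3)) = (t^(q+3))⁻¹ := Real.rpow_neg ht0.le _
  calc (t*|jr|)^(-q) * ((K*c^3 + c₂ * (4*R^4 + 8*R^3)) / (t*|jr|)^3)
      = (K*c^3 + c₂ * (4*R^4 + 8*R^3)) * ((t*|jr|)^(-q) * ((t*|jr|)^3)⁻¹) := by ring
    _ = (K*c^3 + c₂ * (4*R^4 + 8*R^3)) * (t^(-(q+3)) * |jr|^(-(q+3))) := by rw [k1, k2]
    _ = (K*c^3 + c₂ * (4*R^4 + 8*R^3)) * |jr|^(-(q+3)) / t^(q+3) := by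
        rw [k3]; ring


lemma sub_summable {b : ℝ} (hb : 1 < b) :
    Summable (fun j : {j : ℤ // j ≠ 0} => ((|(j : ℤ)| : ℤ) : ℝ) ^ (-b)) := by
  have h : Summable (fun j : ℤ => ((|j| : ℤ) : ℝ) ^ (-b)) := by
    have := Real.summable_abs_int_rpow hb
    refine this.congr fun j => ?_
    rw [Int.cast_abs]
  exact h.subtype _

lemma split_tsum {f : ℤ → ℝ} (hf : Summable (fun j : {j : ℤ // j ≠ 0} => f j)) :
    Summable f ∧ ∑' j : ℤ, f j = f 0 + ∑' j : {j : ℤ // j ≠ 0}, f j := by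
  have hc : Summable (fun j : ↥({j : ℤ | j ≠ 0}ᶜ) => f j) := by
    apply Set.Finite.summable
    have : ({j : ℤ | j ≠ 0}ᶜ : Set ℤ) = {0} := by ext j; simp
    rw [this]
    exact Set.finite_singleton 0
  have hsum : Summable f := by
    rw [← summable_subtype_and_compl]
    exact ⟨hf, hc⟩
  refine ⟨hsum, ?_⟩
  classical
  rw [Summable.tsum_eq_add_tsum_ite hsum 0]
  congr 1
  have hsupp : Function.support (fun j : ℤ => if j = 0 then 0 else f j) ⊆ {j : ℤ | j ≠ 0} := by
    intro j hj
    simp only [Function.mem_support] at hj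
    intro h0
    apply hj
    simp [h0]
  have := tsum_subtype_eq_of_support_subset hsupp
  rw [← this]
  exact (tsum_congr fun j => (if_neg j.2).symm).symm

lemma odd_tsum_zero {g : ℤ → ℝ} (hodd : ∀ j : ℤ, g (-j) = -g j) :
    ∑' j : {j : ℤ // j ≠ 0}, g j = 0 := by
  let e : {j : ℤ // j ≠ 0} ≃ {j : ℤ // j ≠ 0} :=
    ⟨fun j => ⟨-j, neg_ne_zero.mpr j.2⟩, fun j => ⟨-j, neg_ne_zero.mpr j.2⟩,
      fun j => by simp, fun j => by simp⟩
  have h1 : ∑' j : {j : ℤ // j ≠ 0}, g (e j) = ∑' j : {j : ℤ // j ≠ 0}, g j :=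
    e.tsum_eq fun j => g j
  have h2 : ∀ j : {j : ℤ // j ≠ 0}, g (e j) = -g j := fun j => hodd (j : ℤ)
  rw [tsum_congr h2, tsum_neg] at h1
  linarith

lemma odd_support_tsum {F : ℤ → ℝ} (h0 : ∀ j : ℤ, ¬ Odd j → F j = 0) :
    ∑' j : {j : ℤ // j ≠ 0}, F j = ∑' j : {j : ℤ // Odd j}, F j := by
  have hs1 : Function.support F ⊆ {j : ℤ | j ≠ 0} := by
    intro j hj
    simp only [Function.mem_support] at hj
    intro hj0
    exact hj (h0 j (by simp [hj0]))
  have hs2 : Function.support F ⊆ {j : ℤ | Odd j} := by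
    intro j hj
    simp only [Function.mem_support] at hj
    by_contra hodd
    exact hj (h0 j hodd)
  have k1 : ∑' (j : {j : ℤ // j ≠ 0}), F j = ∑' (x : ↑{j : ℤ | j ≠ 0}), F x := rfl
  have k2 : ∑' (j : {j : ℤ // Odd j}), F j = ∑' (x : ↑{j : ℤ | Odd j}), F x := rfl
  rw [k1, k2, tsum_subtype_eq_of_support_subset hs1, ← tsum_subtype_eq_of_support_subset hs2]



noncomputable def gfun (q t z w r : ℝ) (j : ℤ) : ℝ :=
  (2*t)^(-q) * ((|j| : ℤ) : ℝ)^(-q)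
  + (2*t)^(-(q+1)) * (q * (z - (-1:ℝ)^j * w) * ((|j| : ℤ) : ℝ)^(-q) / (j : ℝ))
  + (2*t)^(-(q+2)) * ((|j| : ℤ) : ℝ)^(-(q+2)) * (q*(q+1)/2 * (z - (-1:ℝ)^j*w)^2 - q/2 * r^2)

lemma eps_pm (j : ℤ) : ((-1:ℝ))^j = 1 ∨ ((-1:ℝ))^j = -1 :=
  (Int.even_or_odd j).imp (fun h => h.neg_one_zpow) (fun h => h.neg_one_zpow)

lemma eps_abs (j : ℤ) : |((-1:ℝ))^j| = 1 := by
  rcases eps_pm j with h | h <;> rw [h] <;> norm_num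

lemma eps_neg (j : ℤ) : ((-1:ℝ))^(-j) = ((-1:ℝ))^j := by
  rcases Int.even_or_odd j with h | h
  · rw [h.neg_one_zpow, (h.neg).neg_one_zpow]
  · rw [h.neg_one_zpow, (h.neg).neg_one_zpow]

lemma eps_sq (j : ℤ) : (((-1:ℝ))^j)^2 = 1 := by
  rcases eps_pm j with h | h <;> rw [h] <;> norm_num

lemma sfn_bound {R z w : ℝ} (hz : |z| ≤ R) (hw : |w| ≤ R) (j : ℤ) :
    |z - (-1:ℝ)^j * w| ≤ 2*R := by
  calc |z - (-1:ℝ)^j * w| ≤ |z| + |(-1:ℝ)^j * w| := abs_sub _ _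
    _ = |z| + |w| := by rw [abs_mul, eps_abs, one_mul]
    _ ≤ 2*R := by linarith

lemma tsum_g {q t z w r R : ℝ} (hq : 1 < q) (ht0 : 0 < t) (hR : 0 < R)
    (hz : |z| ≤ R) (hw : |w| ≤ R) (hr0 : 0 ≤ r) (hr : r ≤ 2*R) :
    Summable (fun j : {j : ℤ // j ≠ 0} => gfun q t z w r j) ∧
    ∑' j : {j : ℤ // j ≠ 0}, gfun q t z w r j =
      (∑' j : {j : ℤ // j ≠ 0}, (|(j : ℤ)| : ℝ) ^ (-q)) / (2*t)^q -
      ((q/2 * ∑' j : {j : ℤ // j ≠ 0}, (|(j : ℤ)| : ℝ) ^ (-(q+2))) *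
          (r^2 - (q+1)*(z-w)^2) -
        (2*q*(q+1) * ∑' j : {j : ℤ // Odd j}, (|(j : ℤ)| : ℝ) ^ (-(q+2))) * z * w) /
        (2*t)^(q+2) := by
  have hcq : ∑' j : {j : ℤ // j ≠ 0}, (|((j : ℤ) : ℝ)|) ^ (-q)
      = ∑' j : {j : ℤ // j ≠ 0}, ((|(j : ℤ)| : ℤ) : ℝ) ^ (-q) :=
    tsum_congr (fun j => by rw [← Int.cast_abs])
  have hcq2 : ∑' j : {j : ℤ // j ≠ 0}, (|((j : ℤ) : ℝ)|) ^ (-(q+2))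
      = ∑' j : {j : ℤ // j ≠ 0}, ((|(j : ℤ)| : ℤ) : ℝ) ^ (-(q+2)) :=
    tsum_congr (fun j => by rw [← Int.cast_abs])
  have hcq2o : ∑' j : {j : ℤ // Odd j}, (|((j : ℤ) : ℝ)|) ^ (-(q+2))
      = ∑' j : {j : ℤ // Odd j}, ((|(j : ℤ)| : ℤ) : ℝ) ^ (-(q+2)) :=
    tsum_congr (fun j => by rw [← Int.cast_abs])
  rw [hcq, hcq2, hcq2o]
  have h2t0 : (0:ℝ) < 2*t := by linarith
  set A : ℤ → ℝ := fun j => ((|j| : ℤ) : ℝ)^(-q) with hA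
  set B : ℤ → ℝ := fun j => ((|j| : ℤ) : ℝ)^(-(q+2)) with hB
  set G2 : ℤ → ℝ := fun j => q * (z - (-1:ℝ)^j * w) * A j / (j : ℝ) with hG2
  set G3 : ℤ → ℝ := fun j => B j * (q*(q+1)/2 * (z - (-1:ℝ)^j*w)^2 - q/2 * r^2) with hG3
  have hA_s : Summable (fun j : {j : ℤ // j ≠ 0} => A j) := sub_summable hq
  have hB_s : Summable (fun j : {j : ℤ // j ≠ 0} => B j) := sub_summable (by linarith)
  have hA_nn : ∀ j : ℤ, 0 ≤ A j := fun j => Real.rpow_nonneg (by positivity) _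
  have hB_nn : ∀ j : ℤ, 0 ≤ B j := fun j => Real.rpow_nonneg (by positivity) _
  have habs1 : ∀ j : ℤ, j ≠ 0 → (1:ℝ) ≤ |(j:ℝ)| := by
    intro j hj
    rw [← Int.cast_abs]
    exact_mod_cast Int.one_le_abs hj
  -- G2 bound and summability
  have hG2_bd : ∀ j : {j : ℤ // j ≠ 0}, |G2 j| ≤ (q * (2*R)) * A j := by
    intro j
    rw [hG2]
    simp only
    rw [abs_div, abs_mul, abs_mul, abs_of_nonneg (by linarith : (0:ℝ) ≤ q),
      abs_of_nonneg (hA_nn j)]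
    have h1 : q * |z - (-1:ℝ)^(j:ℤ) * w| * A j / |((j:ℤ):ℝ)| ≤ q * |z - (-1:ℝ)^(j:ℤ) * w| * A j := by
      apply div_le_self (by positivity) (habs1 j j.2)
    refine h1.trans ?_
    have := sfn_bound hz hw (j:ℤ)
    have hAj := hA_nn (j:ℤ)
    calc q * |z - (-1:ℝ)^(j:ℤ) * w| * A (j:ℤ) ≤ q * (2*R) * A (j:ℤ) := by
          apply mul_le_mul_of_nonneg_right _ hAj
          apply mul_le_mul_of_nonneg_left this (by linarith)
      _ = (q * (2*R)) * A (j:ℤ) := by ring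
  have hG2_s : Summable (fun j : {j : ℤ // j ≠ 0} => G2 j) := by
    apply Summable.of_abs
    apply Summable.of_nonneg_of_le (fun j => abs_nonneg _) hG2_bd
    exact hA_s.mul_left _
  -- G3 summability
  have hG3_bd : ∀ j : {j : ℤ // j ≠ 0}, |G3 j| ≤ (q*(q+1)/2 * (2*R)^2 + q/2 * (2*R)^2) * B j := by
    intro j
    rw [hG3]
    simp only
    rw [abs_mul, abs_of_nonneg (hB_nn j), mul_comm]
    apply mul_le_mul_of_nonneg_right _ (hB_nn (j:ℤ))
    have hsb := sfn_bound hz hw (j:ℤ)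
    have hsq : (z - (-1:ℝ)^(j:ℤ)*w)^2 ≤ (2*R)^2 := by
      have := abs_le.mp hsb
      nlinarith [this.1, this.2]
    have hr2 : r^2 ≤ (2*R)^2 := by nlinarith
    have h1 : 0 ≤ q*(q+1)/2 := by nlinarith
    have h2 : 0 ≤ q/2 := by linarith
    calc |q*(q+1)/2 * (z - (-1:ℝ)^(j:ℤ)*w)^2 - q/2 * r^2|
        ≤ |q*(q+1)/2 * (z - (-1:ℝ)^(j:ℤ)*w)^2| + |q/2 * r^2| := abs_sub _ _
      _ = q*(q+1)/2 * (z - (-1:ℝ)^(j:ℤ)*w)^2 + q/2 * r^2 := by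
          rw [abs_of_nonneg (by positivity), abs_of_nonneg (by positivity)]
      _ ≤ q*(q+1)/2 * (2*R)^2 + q/2 * (2*R)^2 := by
          have := mul_le_mul_of_nonneg_left hsq h1
          have := mul_le_mul_of_nonneg_left hr2 h2
          linarith [mul_le_mul_of_nonneg_left hsq h1, mul_le_mul_of_nonneg_left hr2 h2]
  have hG3_s : Summable (fun j : {j : ℤ // j ≠ 0} => G3 j) := by
    apply Summable.of_abs
    apply Summable.of_nonneg_of_le (fun j => abs_nonneg _) hG3_bd
    exact hB_s.mul_left _
  -- summability of g
  have hg_eq : ∀ j : ℤ, gfun q t z w r j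
      = (2*t)^(-q) * A j + (2*t)^(-(q+1)) * G2 j + (2*t)^(-(q+2)) * G3 j := by
    intro j
    rw [gfun, hG2, hG3, hA, hB]
    ring
  have hg_s : Summable (fun j : {j : ℤ // j ≠ 0} => gfun q t z w r j) := by
    apply Summable.congr (f := fun j : {j : ℤ // j ≠ 0} =>
      (2*t)^(-q) * A j + (2*t)^(-(q+1)) * G2 j + (2*t)^(-(q+2)) * G3 j)
    · exact ((hA_s.mul_left _).add (hG2_s.mul_left _)).add (hG3_s.mul_left _)
    · exact fun j => (hg_eq j).symm
  refine ⟨hg_s, ?_⟩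
  -- rewrite the sum
  rw [tsum_congr (fun j : {j : ℤ // j ≠ 0} => hg_eq j)]
  rw [Summable.tsum_add ((hA_s.mul_left _).add (hG2_s.mul_left _)) (hG3_s.mul_left _),
    Summable.tsum_add (hA_s.mul_left _) (hG2_s.mul_left _), tsum_mul_left, tsum_mul_left,
    tsum_mul_left]
  -- the odd sum vanishes
  have hTG2 : ∑' j : {j : ℤ // j ≠ 0}, G2 j = 0 := by
    apply odd_tsum_zero
    intro j
    rw [hG2, hA]
    simp only [abs_neg, eps_neg, Int.cast_neg, div_neg]
  -- evaluate the G3 sum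
  have hF_bd : ∀ j : {j : ℤ // j ≠ 0}, |B (j:ℤ) * (1 - (-1:ℝ)^(j:ℤ))| ≤ 2 * B (j:ℤ) := by
    intro j
    rw [abs_mul, abs_of_nonneg (hB_nn _)]
    have hb2 : |1 - (-1:ℝ)^(j:ℤ)| ≤ 2 := by
      rcases eps_pm (j:ℤ) with h | h <;> rw [h] <;> norm_num
    calc B (j:ℤ) * |1 - (-1:ℝ)^(j:ℤ)| ≤ B (j:ℤ) * 2 :=
          mul_le_mul_of_nonneg_left hb2 (hB_nn _)
      _ = 2 * B (j:ℤ) := mul_comm _ _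
  have hF_s : Summable (fun j : {j : ℤ // j ≠ 0} => B (j:ℤ) * (1 - (-1:ℝ)^(j:ℤ))) := by
    apply Summable.of_abs
    apply Summable.of_nonneg_of_le (fun j => abs_nonneg _) hF_bd
    exact hB_s.mul_left _
  have hG3_eq : ∀ j : ℤ, G3 j = q*(q+1)/2*(z-w)^2 * B j
      + (q*(q+1)*z*w) * (B j * (1 - (-1:ℝ)^j)) - q/2*r^2 * B j := by
    intro j
    rw [hG3]
    simp only
    linear_combination (B j * (q*(q+1)/2) * w^2) * eps_sq j
  have hTG3 : ∑' j : {j : ℤ // j ≠ 0}, G3 j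
      = q*(q+1)/2*(z-w)^2 * (∑' j : {j : ℤ // j ≠ 0}, B (j:ℤ))
      + (q*(q+1)*z*w) * (2 * ∑' j : {j : ℤ // Odd j}, B (j:ℤ))
      - q/2*r^2 * (∑' j : {j : ℤ // j ≠ 0}, B (j:ℤ)) := by
    rw [tsum_congr (fun j : {j : ℤ // j ≠ 0} => hG3_eq j)]
    rw [Summable.tsum_sub ((hB_s.mul_left _).add (hF_s.mul_left _)) (hB_s.mul_left _),
      Summable.tsum_add (hB_s.mul_left _) (hF_s.mul_left _), tsum_mul_left, tsum_mul_left,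
      tsum_mul_left]
    congr 2
    -- odd support
    have h1 : ∑' j : {j : ℤ // j ≠ 0}, B (j:ℤ) * (1 - (-1:ℝ)^(j:ℤ))
        = ∑' j : {j : ℤ // Odd j}, B (j:ℤ) * (1 - (-1:ℝ)^(j:ℤ)) := by
      refine odd_support_tsum (F := fun j : ℤ => B j * (1 - (-1:ℝ)^j)) ?_
      intro j hj
      rw [(Int.not_odd_iff_even.mp hj).neg_one_zpow]
      ring
    rw [h1, tsum_congr (fun j : {j : ℤ // Odd j} => by
      rw [(j.2).neg_one_zpow]; ring_nf :
        ∀ j : {j : ℤ // Odd j}, B (j:ℤ) * (1 - (-1:ℝ)^(j:ℤ)) = 2 * B (j:ℤ)),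
      tsum_mul_left]
  rw [hTG2, hTG3, mul_zero]
  have hq2 : (2*t)^(-q) = ((2*t)^q)⁻¹ := Real.rpow_neg h2t0.le _
  have hq3 : (2*t)^(-(q+2)) = ((2*t)^(q+2))⁻¹ := Real.rpow_neg h2t0.le _
  rw [hq2, hq3, hA, hB]
  simp only
  ring

theorem stmt_17 (n : ℕ) (hn : 1 ≤ n) (q : ℝ) (hq : 1 < q) (R : ℝ) (hR : 0 < R) :
    ∃ C T : ℝ, 0 < T ∧ ∀ t : ℝ, T ≤ t →
      ∀ (x y : EuclideanSpace ℝ (Fin n)) (z w : ℝ),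
        ‖x‖ ≤ R → ‖y‖ ≤ R → |z| ≤ R → |w| ≤ R → ¬(x = y ∧ z = w) →
        |(∑' j : ℤ, (‖x - y‖ ^ 2 + (z - 2 * t * j - (-1 : ℝ) ^ j * w) ^ 2) ^ (-q / 2)) -
            ((‖x - y‖ ^ 2 + (z - w) ^ 2) ^ (-q / 2) +
              (∑' j : {j : ℤ // j ≠ 0}, (|(j : ℤ)| : ℝ) ^ (-q)) / (2 * t) ^ q -
              ((q / 2 * ∑' j : {j : ℤ // j ≠ 0}, (|(j : ℤ)| : ℝ) ^ (-(q + 2))) *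
                    (‖x - y‖ ^ 2 - (q + 1) * (z - w) ^ 2) -
                  (2 * q * (q + 1) *
                      ∑' j : {j : ℤ // Odd j}, (|(j : ℤ)| : ℝ) ^ (-(q + 2))) * z * w) /
                (2 * t) ^ (q + 2))| ≤
          C / t ^ (q + 3) := by
  obtain ⟨K, hK0, htay⟩ := taylor2 (show (0:ℝ) < q/2 by linarith)
  obtain ⟨K', hK'0, hperj⟩ := perj hq hK0 htay hR
  set S3 : ℝ := ∑' j : {j : ℤ // j ≠ 0}, ((|(j : ℤ)| : ℤ) : ℝ) ^ (-(q+3)) with hS3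
  refine ⟨K' * S3, max 1 (8*(R+1)^2), lt_of_lt_of_le one_pos (le_max_left _ _), ?_⟩
  intro t ht x y z w hx hy hz hw _
  have ht1 : (1:ℝ) ≤ t := le_trans (le_max_left _ _) ht
  have ht0 : (0:ℝ) < t := by linarith
  set r : ℝ := ‖x - y‖ with hrdef
  have hr0 : 0 ≤ r := norm_nonneg _
  have hr2R : r ≤ 2*R := by
    calc r ≤ ‖x‖ + ‖y‖ := norm_sub_le x y
      _ ≤ 2*R := by linarith
  set f : ℤ → ℝ := fun j => (r ^ 2 + (z - 2 * t * j - (-1 : ℝ) ^ j * w) ^ 2) ^ (-q / 2)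
    with hf
  -- per-term estimate
  have hfg : ∀ j : {j : ℤ // j ≠ 0},
      |f j - gfun q t z w r j| ≤ K' * ((|(j:ℤ)|:ℤ):ℝ)^(-(q+3)) / t^(q+3) := by
    intro j
    have h := hperj t ht r (z - (-1:ℝ)^(j:ℤ)*w) hr0 hr2R (sfn_bound hz hw (j:ℤ)) j j.2
    have hre : (r^2 + ((z - (-1:ℝ)^(j:ℤ)*w) - 2*t*((j:ℤ):ℝ))^2)
        = (r ^ 2 + (z - 2 * t * ((j:ℤ):ℝ) - (-1 : ℝ) ^ (j:ℤ) * w) ^ 2) := by ring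
    rw [hre] at h
    simp only [hf, gfun]
    exact h
  obtain ⟨hg_s, hg_tsum⟩ := tsum_g hq ht0 hR hz hw hr0 hr2R
  have hS3_s : Summable (fun j : {j:ℤ//j≠0} => ((|(j:ℤ)|:ℤ):ℝ)^(-(q+3))) :=
    sub_summable (by linarith)
  have herr_s : Summable (fun j : {j:ℤ//j≠0} => K' * ((|(j:ℤ)|:ℤ):ℝ)^(-(q+3)) / t^(q+3)) :=
    (hS3_s.mul_left K').div_const _
  have habs_s : Summable (fun j : {j:ℤ//j≠0} => |f j - gfun q t z w r j|) :=
    Summable.of_nonneg_of_le (fun j => abs_nonneg _) hfg herr_s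
  have hdiff_s : Summable (fun j : {j:ℤ//j≠0} => f j - gfun q t z w r j) :=
    habs_s.of_abs
  have hf_s : Summable (fun j : {j:ℤ//j≠0} => f j) :=
    (hdiff_s.add hg_s).congr (fun j => by ring)
  obtain ⟨hfZ, hsplit⟩ := split_tsum hf_s
  have hf0 : f 0 = (r ^ 2 + (z - w) ^ 2) ^ (-q / 2) := by
    rw [hf]
    norm_num
  -- bound on the residual sum
  have hbound : |∑' j : {j:ℤ//j≠0}, (f j - gfun q t z w r j)| ≤ K' * S3 / t^(q+3) := by
    have h1 : ‖∑' j : {j:ℤ//j≠0}, (f j - gfun q t z w r j)‖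
        ≤ ∑' j : {j:ℤ//j≠0}, ‖f j - gfun q t z w r j‖ := by
      apply norm_tsum_le_tsum_norm
      simpa only [Real.norm_eq_abs] using habs_s
    rw [Real.norm_eq_abs] at h1
    have h2 : ∑' j : {j:ℤ//j≠0}, ‖f j - gfun q t z w r j‖
        ≤ ∑' j : {j:ℤ//j≠0}, K' * ((|(j:ℤ)|:ℤ):ℝ)^(-(q+3)) / t^(q+3) := by
      apply Summable.tsum_le_tsum _ (by simpa only [Real.norm_eq_abs] using habs_s) herr_s
      intro j
      rw [Real.norm_eq_abs]
      exact hfg j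
    have h3 : ∑' j : {j:ℤ//j≠0}, K' * ((|(j:ℤ)|:ℤ):ℝ)^(-(q+3)) / t^(q+3)
        = K' * S3 / t^(q+3) := by
      rw [tsum_div_const, tsum_mul_left]
    exact h1.trans (h2.trans_eq h3)
  have hkey : (∑' j : ℤ, f j) -
      ((r ^ 2 + (z - w) ^ 2) ^ (-q / 2) +
        (∑' j : {j : ℤ // j ≠ 0}, (|(j : ℤ)| : ℝ) ^ (-q)) / (2 * t) ^ q -
        ((q / 2 * ∑' j : {j : ℤ // j ≠ 0}, (|(j : ℤ)| : ℝ) ^ (-(q + 2))) *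
              (r ^ 2 - (q + 1) * (z - w) ^ 2) -
            (2 * q * (q + 1) *
                ∑' j : {j : ℤ // Odd j}, (|(j : ℤ)| : ℝ) ^ (-(q + 2))) * z * w) /
          (2 * t) ^ (q + 2))
      = ∑' j : {j:ℤ//j≠0}, (f j - gfun q t z w r j) := by
    rw [hsplit, hf0, Summable.tsum_sub hf_s hg_s, hg_tsum]
    ring
  rw [hkey]
  exact hbound
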